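/- Let p > 2, p' = p/(p-1), and let φ be the implicit function with p(1-1/p)^{p-1}(1+φ(s))^{p-2}(φ(s)-p+2) = s. Define L(s) = (1-1/p) s [ φ(s) + 1/(φ(s)-p+2) ] − (p-1)/p · s^{p/(p-1)} for s > 0. Then L(s) ≤ (p-1)^p / p for all s > 0, with equality at s = (p-1)^{p-1}. -/

import Mathlib

noncomputable def L2 (p : ℝ) (φ : ℝ → ℝ) (s : ℝ) : ℝ :=
  (1 - 1 / p) * s * (φ s + 1 / (φ s - p + 2)) - (p - 1) / p * s ^ (p / (p - 1))

/-- the parametrized "s" as function of x = φ s -/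
noncomputable def psi18 (p x : ℝ) : ℝ :=
  p * (1 - 1 / p) ^ (p - 1) * (1 + x) ^ (p - 2) * (x - p + 2)

/-- derivative of psi18 -/
noncomputable def psid18 (p x : ℝ) : ℝ :=
  p * (1 - 1 / p) ^ (p - 1) *
    ((p - 2) * (1 + x) ^ (p - 2 - 1) * (x - p + 2) + (1 + x) ^ (p - 2))

/-- L2 reparametrized, up to factor (p-1)/p -/
noncomputable def H18 (p x : ℝ) : ℝ :=
  psi18 p x * x + p * (1 - 1 / p) ^ (p - 1) * (1 + x) ^ (p - 2)
    - psi18 p x ^ (p / (p - 1))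

/-- (p-1) log x - log (psi18 p x) -/
noncomputable def r18 (p x : ℝ) : ℝ :=
  (p - 1) * Real.log x - Real.log (p * (1 - 1 / p) ^ (p - 1))
    - (p - 2) * Real.log (1 + x) - Real.log (x - p + 2)

lemma c18_pos {p : ℝ} (hp : 2 < p) : 0 < p * (1 - 1 / p) ^ (p - 1) := by
  have hp0 : (0:ℝ) < p := by linarith
  have h1 : (0:ℝ) < 1 - 1 / p := by
    rw [sub_pos, div_lt_one hp0]; linarith
  exact mul_pos hp0 (Real.rpow_pos_of_pos h1 _)

lemma psi18_pos {p x : ℝ} (hp : 2 < p) (hx : p - 2 < x) : 0 < psi18 p x := by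
  have h1x : (0:ℝ) < 1 + x := by linarith
  exact mul_pos (mul_pos (c18_pos hp) (Real.rpow_pos_of_pos h1x _)) (by linarith)

lemma psid18_pos {p x : ℝ} (hp : 2 < p) (hx : p - 2 < x) : 0 < psid18 p x := by
  have h1x : (0:ℝ) < 1 + x := by linarith
  have h1 : 0 < (p - 2) * (1 + x) ^ (p - 2 - 1) * (x - p + 2) :=
    mul_pos (mul_pos (by linarith) (Real.rpow_pos_of_pos h1x _)) (by linarith)
  have h2 : 0 < (1 + x) ^ (p - 2) := Real.rpow_pos_of_pos h1x _
  exact mul_pos (c18_pos hp) (by linarith)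

lemma psi18_hasDeriv {p x : ℝ} (hp : 2 < p) (hx : p - 2 < x) :
    HasDerivAt (fun y => psi18 p y) (psid18 p x) x := by
  have h1x : (0:ℝ) < 1 + x := by linarith
  have hbase : HasDerivAt (fun y : ℝ => 1 + y) 1 x := (hasDerivAt_id x).const_add 1
  have hg : HasDerivAt (fun y : ℝ => (1 + y) ^ (p - 2))
      ((p - 2) * (1 + x) ^ (p - 2 - 1)) x := by
    have := hbase.rpow_const (p := p - 2) (Or.inl h1x.ne')
    simpa using this
  have hu : HasDerivAt (fun y : ℝ => y - p + 2) 1 x := by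
    simpa using ((hasDerivAt_id x).sub_const p).add_const 2
  have := ((hg.const_mul (p * (1 - 1 / p) ^ (p - 1))).mul hu)
  refine this.congr_deriv ?_
  simp only [psid18]; ring

lemma psi18_strictMonoOn {p : ℝ} (hp : 2 < p) :
    StrictMonoOn (fun x => psi18 p x) (Set.Ioi (p - 2)) := by
  intro a ha b hb hab
  simp only [Set.mem_Ioi] at ha hb
  have h1a : (0:ℝ) < 1 + a := by linarith
  have h1 : (1 + a) ^ (p - 2) ≤ (1 + b) ^ (p - 2) :=
    Real.rpow_le_rpow h1a.le (by linarith) (by linarith)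
  have h2 : (0:ℝ) < a - p + 2 := by linarith
  have hgb : 0 < (1 + b) ^ (p - 2) := Real.rpow_pos_of_pos (by linarith) _
  have hga : 0 < (1 + a) ^ (p - 2) := Real.rpow_pos_of_pos h1a _
  have hc := c18_pos hp
  simp only [psi18]
  calc p * (1 - 1 / p) ^ (p - 1) * (1 + a) ^ (p - 2) * (a - p + 2)
      ≤ p * (1 - 1 / p) ^ (p - 1) * (1 + b) ^ (p - 2) * (a - p + 2) := by
        apply mul_le_mul_of_nonneg_right _ h2.le
        exact mul_le_mul_of_nonneg_left h1 hc.le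
    _ < p * (1 - 1 / p) ^ (p - 1) * (1 + b) ^ (p - 2) * (b - p + 2) := by
        apply mul_lt_mul_of_pos_left (by linarith) (mul_pos hc hgb)

lemma psi18_eval {p : ℝ} (hp : 2 < p) : psi18 p (p - 1) = (p - 1) ^ (p - 1) := by
  have hp0 : (0:ℝ) < p := by linarith
  have hp1 : (0:ℝ) < p - 1 := by linarith
  have h1 : 1 - 1 / p = (p - 1) / p := by field_simp
  have h2 : (1:ℝ) + (p - 1) = p := by ring
  have h3 : p - 1 - p + 2 = 1 := by ring
  have h4 : ((p - 1) / p) ^ (p - 1) = (p - 1) ^ (p - 1) / p ^ (p - 1) :=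
    Real.div_rpow hp1.le hp0.le _
  have h5 : p ^ (p - 1) = p ^ (p - 2) * p := by
    rw [show p - 1 = p - 2 + 1 by ring, Real.rpow_add_one hp0.ne']
  have hps : (0:ℝ) < p ^ (p - 2) := Real.rpow_pos_of_pos hp0 _
  simp only [psi18, h1, h2, h3, h4, h5]
  field_simp

lemma log_psi18 {p x : ℝ} (hp : 2 < p) (hx : p - 2 < x) :
    Real.log (psi18 p x) = Real.log (p * (1 - 1 / p) ^ (p - 1))
      + (p - 2) * Real.log (1 + x) + Real.log (x - p + 2) := by
  have h1x : (0:ℝ) < 1 + x := by linarith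
  have hc := c18_pos hp
  have hg : (0:ℝ) < (1 + x) ^ (p - 2) := Real.rpow_pos_of_pos h1x _
  rw [psi18, Real.log_mul (mul_pos hc hg).ne' (by linarith : (0:ℝ) < x - p + 2).ne',
    Real.log_mul hc.ne' hg.ne', Real.log_rpow h1x]

lemma r18_eq {p x : ℝ} (hp : 2 < p) (hx : p - 2 < x) :
    r18 p x = (p - 1) * Real.log x - Real.log (psi18 p x) := by
  rw [log_psi18 hp hx, r18]; ring

lemma r18_hasDeriv {p x : ℝ} (hp : 2 < p) (hx : p - 2 < x) :
    HasDerivAt (fun y => r18 p y)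
      ((p - 1) * x⁻¹ - (p - 2) * (1 + x)⁻¹ - (x - p + 2)⁻¹) x := by
  have hx0 : (0:ℝ) < x := by linarith
  have h1x : (0:ℝ) < 1 + x := by linarith
  have h2 : (0:ℝ) < x - p + 2 := by linarith
  have hbase : HasDerivAt (fun y : ℝ => 1 + y) 1 x := (hasDerivAt_id x).const_add 1
  have hu : HasDerivAt (fun y : ℝ => y - p + 2) 1 x := by
    simpa using ((hasDerivAt_id x).sub_const p).add_const 2
  have d1 : HasDerivAt (fun y : ℝ => (p - 1) * Real.log y) ((p - 1) * x⁻¹) x :=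
    (Real.hasDerivAt_log hx0.ne').const_mul _
  have d2 : HasDerivAt (fun y : ℝ => Real.log (1 + y)) ((1 + x)⁻¹) x := by
    simpa [Function.comp_def] using (Real.hasDerivAt_log h1x.ne').comp x hbase
  have d3 : HasDerivAt (fun y : ℝ => Real.log (y - p + 2)) ((x - p + 2)⁻¹) x := by
    simpa [Function.comp_def] using (Real.hasDerivAt_log h2.ne').comp x hu
  have final := ((d1.sub_const (Real.log (p * (1 - 1 / p) ^ (p - 1)))).sub
    (d2.const_mul (p - 2))).sub d3
  simp only [r18]
  exact final

lemma r18_deriv_neg {p x : ℝ} (hp : 2 < p) (hx : p - 2 < x) :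
    (p - 1) * x⁻¹ - (p - 2) * (1 + x)⁻¹ - (x - p + 2)⁻¹ < 0 := by
  have hx0 : (0:ℝ) < x := by linarith
  have h1x : (0:ℝ) < 1 + x := by linarith
  have h2 : (0:ℝ) < x - p + 2 := by linarith
  have key : (p - 1) * x⁻¹ - (p - 2) * (1 + x)⁻¹ - (x - p + 2)⁻¹
      = -((p - 1) * (p - 2)) / (x * (1 + x) * (x - p + 2)) := by
    field_simp
    ring
  rw [key]
  apply div_neg_of_neg_of_pos
  · nlinarith
  · positivity

lemma r18_strictAnti {p : ℝ} (hp : 2 < p) :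
    StrictAntiOn (fun x => r18 p x) (Set.Ioi (p - 2)) := by
  apply strictAntiOn_of_deriv_neg (convex_Ioi _)
  · intro x hx
    exact (r18_hasDeriv hp hx).differentiableAt.continuousAt.continuousWithinAt
  · intro x hx
    rw [interior_Ioi] at hx
    rw [(r18_hasDeriv hp hx).deriv]
    exact r18_deriv_neg hp hx

lemma r18_eval {p : ℝ} (hp : 2 < p) : r18 p (p - 1) = 0 := by
  have hp1 : (0:ℝ) < p - 1 := by linarith
  rw [r18_eq hp (by linarith), psi18_eval hp, Real.log_rpow hp1]
  ring

lemma psi18_lt {p x : ℝ} (hp : 2 < p) (hx : p - 2 < x) (hxp : x < p - 1) :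
    psi18 p x < x ^ (p - 1) := by
  have hx0 : (0:ℝ) < x := by linarith
  have hr : 0 < r18 p x := by
    have h := r18_strictAnti hp (Set.mem_Ioi.mpr hx) (Set.mem_Ioi.mpr (by linarith)) hxp
    simpa [r18_eval hp] using h
  rw [r18_eq hp hx, sub_pos] at hr
  have : Real.log (psi18 p x) < Real.log (x ^ (p - 1)) := by
    rwa [Real.log_rpow hx0]
  calc psi18 p x = Real.exp (Real.log (psi18 p x)) :=
        (Real.exp_log (psi18_pos hp hx)).symm
    _ < Real.exp (Real.log (x ^ (p - 1))) := Real.exp_lt_exp.mpr this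
    _ = x ^ (p - 1) := Real.exp_log (Real.rpow_pos_of_pos hx0 _)

lemma psi18_gt {p x : ℝ} (hp : 2 < p) (hxp : p - 1 < x) :
    x ^ (p - 1) < psi18 p x := by
  have hx : p - 2 < x := by linarith
  have hx0 : (0:ℝ) < x := by linarith
  have hr : r18 p x < 0 := by
    have h := r18_strictAnti hp (Set.mem_Ioi.mpr (by linarith : p - 2 < p - 1))
      (Set.mem_Ioi.mpr hx) hxp
    simpa [r18_eval hp] using h
  rw [r18_eq hp hx, sub_neg] at hr
  have : Real.log (x ^ (p - 1)) < Real.log (psi18 p x) := by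
    rwa [Real.log_rpow hx0]
  calc x ^ (p - 1) = Real.exp (Real.log (x ^ (p - 1))) :=
        (Real.exp_log (Real.rpow_pos_of_pos hx0 _)).symm
    _ < Real.exp (Real.log (psi18 p x)) := Real.exp_lt_exp.mpr this
    _ = psi18 p x := Real.exp_log (psi18_pos hp hx)

lemma H18_hasDeriv {p x : ℝ} (hp : 2 < p) (hx : p - 2 < x) :
    HasDerivAt (fun y => H18 p y)
      (p / (p - 1) * psid18 p x * (x - psi18 p x ^ (1 / (p - 1)))) x := by
  have hp1 : (0:ℝ) < p - 1 := by linarith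
  have h1x : (0:ℝ) < 1 + x := by linarith
  have hψ := psi18_pos hp hx
  have hbase : HasDerivAt (fun y : ℝ => 1 + y) 1 x := (hasDerivAt_id x).const_add 1
  have hg : HasDerivAt (fun y : ℝ => (1 + y) ^ (p - 2))
      ((p - 2) * (1 + x) ^ (p - 2 - 1)) x := by
    have := hbase.rpow_const (p := p - 2) (Or.inl h1x.ne')
    simpa using this
  have hψd := psi18_hasDeriv hp hx
  have d1 : HasDerivAt (fun y => psi18 p y * y) (psid18 p x * x + psi18 p x) x := by
    have := hψd.mul (hasDerivAt_id x)
    exact this.congr_deriv (by simp)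
  have d2 : HasDerivAt (fun y : ℝ => p * (1 - 1 / p) ^ (p - 1) * (1 + y) ^ (p - 2))
      (p * (1 - 1 / p) ^ (p - 1) * ((p - 2) * (1 + x) ^ (p - 2 - 1))) x :=
    hg.const_mul _
  have d3 : HasDerivAt (fun y => psi18 p y ^ (p / (p - 1)))
      (psid18 p x * (p / (p - 1)) * psi18 p x ^ (p / (p - 1) - 1)) x :=
    hψd.rpow_const (Or.inl hψ.ne')
  have hD := (d1.add d2).sub d3
  refine hD.congr_deriv ?_
  have hexp : p / (p - 1) - 1 = 1 / (p - 1) := by field_simp; ring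
  rw [hexp]
  -- key algebraic identity
  have hsplit : (1 + x) ^ (p - 2) = (1 + x) ^ (p - 2 - 1) * (1 + x) := by
    have h := Real.rpow_add_one h1x.ne' (p - 2 - 1)
    rw [show p - 2 - 1 + 1 = p - 2 by ring] at h
    exact h
  have hkey : psi18 p x + p * (1 - 1 / p) ^ (p - 1) * ((p - 2) * (1 + x) ^ (p - 2 - 1))
      = x * psid18 p x / (p - 1) := by
    simp only [psi18, psid18, hsplit]
    field_simp
    ring
  have : p / (p - 1) * psid18 p x * (x - psi18 p x ^ (1 / (p - 1)))
      = p / (p - 1) * psid18 p x * x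
        - psid18 p x * (p / (p - 1)) * psi18 p x ^ (1 / (p - 1)) := by ring
  rw [this]
  have h2 : psid18 p x * x + psi18 p x
      + p * (1 - 1 / p) ^ (p - 1) * ((p - 2) * (1 + x) ^ (p - 2 - 1))
      = p / (p - 1) * psid18 p x * x := by
    rw [add_assoc, hkey]
    field_simp
    ring
  linarith [h2]

lemma H18_eval {p : ℝ} (hp : 2 < p) : H18 p (p - 1) = (p - 1) ^ (p - 1) := by
  have hp1 : (0:ℝ) < p - 1 := by linarith
  have h1 : p * (1 - 1 / p) ^ (p - 1) * (1 + (p - 1)) ^ (p - 2) = psi18 p (p - 1) := by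
    simp [psi18]
    norm_num
  have h2 : psi18 p (p - 1) ^ (p / (p - 1)) = (p - 1) ^ p := by
    rw [psi18_eval hp, ← Real.rpow_mul hp1.le]
    congr 1
    field_simp
  have h3 : (p - 1) ^ (p - 1) * (p - 1) = (p - 1) ^ p := by
    have h := Real.rpow_add_one hp1.ne' (p - 1)
    rw [show p - 1 + 1 = p by ring] at h
    exact h.symm
  rw [H18, h1, h2, psi18_eval hp]
  linarith [h3]

lemma H18_le {p x : ℝ} (hp : 2 < p) (hx : p - 2 < x) :
    H18 p x ≤ H18 p (p - 1) := by
  have hp1 : (0:ℝ) < p - 1 := by linarith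
  rcases lt_trichotomy x (p - 1) with hlt | heq | hgt
  · -- increasing on Ioc (p-2) (p-1)
    have mono : StrictMonoOn (fun y => H18 p y) (Set.Ioc (p - 2) (p - 1)) := by
      apply strictMonoOn_of_deriv_pos (convex_Ioc _ _)
      · intro y hy
        exact (H18_hasDeriv hp hy.1).differentiableAt.continuousAt.continuousWithinAt
      · intro y hy
        rw [interior_Ioc] at hy
        rw [(H18_hasDeriv hp hy.1).deriv]
        have hy0 : (0:ℝ) < y := by linarith [hy.1]
        have hψlt := psi18_lt hp hy.1 hy.2
        have hroot : psi18 p y ^ (1 / (p - 1)) < y := by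
          have := Real.rpow_lt_rpow (psi18_pos hp hy.1).le hψlt
            (by positivity : (0:ℝ) < 1 / (p - 1))
          rwa [← Real.rpow_mul hy0.le, mul_one_div, div_self hp1.ne',
            Real.rpow_one] at this
        have hd := psid18_pos hp hy.1
        have hpp : (0:ℝ) < p / (p - 1) := by positivity
        exact mul_pos (mul_pos hpp hd) (sub_pos.mpr hroot)
    exact (mono (Set.mem_Ioc.mpr ⟨hx, hlt.le⟩)
      (Set.mem_Ioc.mpr ⟨by linarith, le_rfl⟩) hlt).le
  · rw [heq]
  · -- decreasing on Ici (p-1)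
    have anti : StrictAntiOn (fun y => H18 p y) (Set.Ici (p - 1)) := by
      apply strictAntiOn_of_deriv_neg (convex_Ici _)
      · intro y hy
        have : p - 2 < y := by simp at hy; linarith
        exact (H18_hasDeriv hp this).differentiableAt.continuousAt.continuousWithinAt
      · intro y hy
        rw [interior_Ici] at hy
        have hy1 : p - 1 < y := hy
        have hyx : p - 2 < y := by linarith
        have hy0 : (0:ℝ) < y := by linarith
        rw [(H18_hasDeriv hp hyx).deriv]
        have hψgt := psi18_gt hp hy1
        have hroot : y < psi18 p y ^ (1 / (p - 1)) := by
          have := Real.rpow_lt_rpow (Real.rpow_pos_of_pos hy0 (p - 1)).le hψgt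
            (by positivity : (0:ℝ) < 1 / (p - 1))
          rwa [← Real.rpow_mul hy0.le, mul_one_div, div_self hp1.ne',
            Real.rpow_one] at this
        have h1 := psid18_pos hp hyx
        have hpp : (0:ℝ) < p / (p - 1) := by positivity
        exact mul_neg_of_pos_of_neg (mul_pos hpp h1) (sub_neg.mpr hroot)
    exact (anti (Set.mem_Ici.mpr le_rfl) (Set.mem_Ici.mpr hgt.le) hgt).le

lemma L2_eq {p : ℝ} (hp : 2 < p) (φ : ℝ → ℝ) {s : ℝ} (hs : 0 < s)
    (hdom : p - 2 < φ s)
    (heq : p * (1 - 1 / p) ^ (p - 1) * (1 + φ s) ^ (p - 2) * (φ s - p + 2) = s) :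
    L2 p φ s = (p - 1) / p * H18 p (φ s) := by
  have hp0 : (0:ℝ) < p := by linarith
  have hd : (0:ℝ) < φ s - p + 2 := by linarith
  have hψ : psi18 p (φ s) = s := heq
  rw [L2, H18]
  set x := φ s with hxdef
  rw [← hψ]
  simp only [psi18]
  have h1 : (1:ℝ) - 1 / p = (p - 1) / p := by field_simp
  rw [h1]
  field_simp

theorem stmt_18 (p : ℝ) (hp : 2 < p) (φ : ℝ → ℝ)
    (hφdom : ∀ s, 0 < s → p - 2 < φ s)
    (hφ : ∀ s, 0 < s →
      p * (1 - 1 / p) ^ (p - 1) * (1 + φ s) ^ (p - 2) * (φ s - p + 2) = s) :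
    (∀ s, 0 < s → L2 p φ s ≤ (p - 1) ^ p / p) ∧
    L2 p φ ((p - 1) ^ (p - 1)) = (p - 1) ^ p / p := by
  have hp0 : (0:ℝ) < p := by linarith
  have hp1 : (0:ℝ) < p - 1 := by linarith
  have hfin : (p - 1) / p * (p - 1) ^ (p - 1) = (p - 1) ^ p / p := by
    have h3 : (p - 1) ^ (p - 1) * (p - 1) = (p - 1) ^ p := by
      have h := Real.rpow_add_one hp1.ne' (p - 1)
      rw [show p - 1 + 1 = p by ring] at h
      exact h.symm
    field_simp
    linarith [h3]
  constructor
  · intro s hs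
    rw [L2_eq hp φ hs (hφdom s hs) (hφ s hs)]
    calc (p - 1) / p * H18 p (φ s) ≤ (p - 1) / p * H18 p (p - 1) := by
          apply mul_le_mul_of_nonneg_left (H18_le hp (hφdom s hs)) (by positivity)
      _ = (p - 1) ^ p / p := by rw [H18_eval hp]; exact hfin
  · have hs0 : (0:ℝ) < (p - 1) ^ (p - 1) := Real.rpow_pos_of_pos hp1 _
    have hval : φ ((p - 1) ^ (p - 1)) = p - 1 := by
      apply (psi18_strictMonoOn hp).injOn
        (Set.mem_Ioi.mpr (hφdom _ hs0)) (Set.mem_Ioi.mpr (by linarith))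
      show psi18 p (φ ((p - 1) ^ (p - 1))) = psi18 p (p - 1)
      rw [psi18_eval hp]
      exact hφ _ hs0
    rw [L2_eq hp φ hs0 (hφdom _ hs0) (hφ _ hs0), hval, H18_eval hp]
    exact hfin
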